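/- Let a ∈ ℝ and let G : ℝ → ℝ be nondecreasing and right-continuous with G(x) = 0 for all x < a, and suppose G is differentiable at every x > a with derivative G' log-convex on (a,∞). Fix an integer n ≥ 1 and define the sequence u_0 = G(a + 1/n) and u_m = G(a + (m+1)/n) − G(a + m/n) for m ≥ 1 (these are the jumps of the discretized function G_n of Lemma 2.2 at the points a + m/n). Then the sequence (u_m)_{m≥0} is log-convex, i.e. u_{m+1}^2 ≤ u_m · u_{m+2} for all m ≥ 0. -/

import Mathlib

open MeasureTheory Set Filter

/-- Derivative of a monotone function is nonnegative. -/
lemma monotone_hasDerivAt_nonneg {G : ℝ → ℝ} (hmono : Monotone G) {x d : ℝ}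
    (h : HasDerivAt G d x) : 0 ≤ d := by
  rw [hasDerivAt_iff_tendsto_slope] at h
  have h' : Tendsto (slope G x) (nhdsWithin x (Ioi x)) (nhds d) :=
    h.mono_left (nhdsWithin_mono x (fun y hy => ne_of_gt hy))
  refine ge_of_tendsto h' ?_
  filter_upwards [eventually_mem_nhdsWithin] with y hy
  rw [slope_def_field]
  exact div_nonneg (sub_nonneg.2 (hmono (le_of_lt hy))) (sub_nonneg.2 (le_of_lt hy))

/-- Cauchy–Schwarz style inequality for set integrals on an interval. -/
lemma integral_sq_le_cs {s t : ℝ} (f g p : ℝ → ℝ)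
    (hfm : AEMeasurable f (volume.restrict (Ioc s t)))
    (hgm : AEMeasurable g (volume.restrict (Ioc s t)))
    (hf0 : ∀ x ∈ Ioc s t, 0 ≤ f x) (hg0 : ∀ x ∈ Ioc s t, 0 ≤ g x)
    (hp0 : ∀ x ∈ Ioc s t, 0 ≤ p x)
    (hfi : IntegrableOn f (Ioc s t)) (hgi : IntegrableOn g (Ioc s t))
    (hptw : ∀ x ∈ Ioc s t, p x ^ 2 ≤ f x * g x) :
    (∫ x in Ioc s t, p x) ^ 2 ≤ (∫ x in Ioc s t, f x) * (∫ x in Ioc s t, g x) := by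
  set μ := volume.restrict (Ioc s t) with hμ
  have hmem : ∀ᵐ x ∂μ, x ∈ Ioc s t := ae_restrict_mem measurableSet_Ioc
  set F : ℝ → ℝ := fun x => Real.sqrt (f x) with hF
  set G : ℝ → ℝ := fun x => Real.sqrt (g x) with hG
  have hFm : AEStronglyMeasurable F μ :=
    (Real.continuous_sqrt.measurable.comp_aemeasurable hfm).aestronglyMeasurable
  have hGm : AEStronglyMeasurable G μ :=
    (Real.continuous_sqrt.measurable.comp_aemeasurable hgm).aestronglyMeasurable
  have hF2 : MeasureTheory.MemLp F 2 μ := by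
    rw [memLp_two_iff_integrable_sq hFm]
    refine hfi.congr ?_
    filter_upwards [hmem] with x hx
    exact (Real.sq_sqrt (hf0 x hx)).symm
  have hG2 : MeasureTheory.MemLp G 2 μ := by
    rw [memLp_two_iff_integrable_sq hGm]
    refine hgi.congr ?_
    filter_upwards [hmem] with x hx
    exact (Real.sq_sqrt (hg0 x hx)).symm
  have hFGi : Integrable (fun x => F x * G x) μ := by
    refine Integrable.mono ((hF2.integrable_sq.add hG2.integrable_sq).div_const 2)
      (hFm.mul hGm) ?_
    filter_upwards [] with x
    simp only [Pi.add_apply]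
    rw [Real.norm_of_nonneg (mul_nonneg (Real.sqrt_nonneg _) (Real.sqrt_nonneg _))]
    refine le_trans ?_ (le_abs_self _)
    nlinarith [sq_nonneg (F x - G x)]
  have step1 : ∫ x in Ioc s t, p x ≤ ∫ x in Ioc s t, F x * G x := by
    refine integral_mono_of_nonneg ?_ hFGi ?_
    · filter_upwards [hmem] with x hx; exact hp0 x hx
    · filter_upwards [hmem] with x hx
      have h1 : p x = Real.sqrt (p x ^ 2) := (Real.sqrt_sq (hp0 x hx)).symm
      calc p x = Real.sqrt (p x ^ 2) := h1
        _ ≤ Real.sqrt (f x * g x) := Real.sqrt_le_sqrt (hptw x hx)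
        _ = F x * G x := Real.sqrt_mul (hf0 x hx) _
  have hpq : Real.HolderConjugate 2 2 := Real.HolderConjugate.two_two
  have h2 : ENNReal.ofReal (2:ℝ) = 2 := by norm_num
  have step2 : ∫ x, F x * G x ∂μ ≤
      (∫ x, F x ^ (2:ℝ) ∂μ) ^ ((1:ℝ)/2) * (∫ x, G x ^ (2:ℝ) ∂μ) ^ ((1:ℝ)/2) := by
    refine integral_mul_le_Lp_mul_Lq_of_nonneg hpq ?_ ?_ (h2 ▸ hF2) (h2 ▸ hG2)
    · filter_upwards [] with x; exact Real.sqrt_nonneg _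
    · filter_upwards [] with x; exact Real.sqrt_nonneg _
  have hFint : ∫ x, F x ^ (2:ℝ) ∂μ = ∫ x, f x ∂μ := by
    refine integral_congr_ae ?_
    filter_upwards [hmem] with x hx
    rw [show ((2:ℝ)) = ((2:ℕ):ℝ) by norm_num, Real.rpow_natCast]
    exact Real.sq_sqrt (hf0 x hx)
  have hGint : ∫ x, G x ^ (2:ℝ) ∂μ = ∫ x, g x ∂μ := by
    refine integral_congr_ae ?_
    filter_upwards [hmem] with x hx
    rw [show ((2:ℝ)) = ((2:ℕ):ℝ) by norm_num, Real.rpow_natCast]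
    exact Real.sq_sqrt (hg0 x hx)
  rw [hFint, hGint] at step2
  have hA : 0 ≤ ∫ x, f x ∂μ := integral_nonneg_of_ae (by filter_upwards [hmem] with x hx; exact hf0 x hx)
  have hB : 0 ≤ ∫ x, g x ∂μ := integral_nonneg_of_ae (by filter_upwards [hmem] with x hx; exact hg0 x hx)
  have hL : 0 ≤ ∫ x in Ioc s t, p x := integral_nonneg_of_ae (by filter_upwards [hmem] with x hx; exact hp0 x hx)
  calc (∫ x in Ioc s t, p x) ^ 2
      ≤ ((∫ x, f x ∂μ) ^ ((1:ℝ)/2) * (∫ x, g x ∂μ) ^ ((1:ℝ)/2)) ^ 2 :=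
        pow_le_pow_left₀ hL (step1.trans step2) 2
    _ = (∫ x in Ioc s t, f x) * (∫ x in Ioc s t, g x) := by
        rw [← Real.sqrt_eq_rpow, ← Real.sqrt_eq_rpow, mul_pow, Real.sq_sqrt hA, Real.sq_sqrt hB]

/-- log-convexity of the jumps in Lemma 2.2: with `G` nondecreasing,
right-continuous, vanishing on `(-∞, a)` and differentiable on `(a,∞)` with log-convex
derivative, and `n ≥ 1` fixed, the sequence of jumps `u 0 = G (a + 1/n)`,
`u m = G (a + (m+1)/n) - G (a + m/n)` for `m ≥ 1`, is log-convex. -/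
theorem jumps_logConvex (a : ℝ) (G G' : ℝ → ℝ)
    (hmono : Monotone G)
    (hrc : ∀ x : ℝ, ContinuousWithinAt G (Ici x) x)
    (hG0 : ∀ x, x < a → G x = 0)
    (hderiv : ∀ x, a < x → HasDerivAt G (G' x) x)
    (hlc : ∀ x, a < x → ∀ y ∈ Ioo (0 : ℝ) 1,
      (G' (x + y)) ^ 2 ≤ G' x * G' (x + 2 * y))
    (n : ℕ) (hn : 1 ≤ n) (u : ℕ → ℝ)
    (hu0 : u 0 = G (a + 1 / n))
    (hum : ∀ m : ℕ, 1 ≤ m → u m = G (a + ((m : ℝ) + 1) / n) - G (a + (m : ℝ) / n)) :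
    ∀ m : ℕ, (u (m + 1)) ^ 2 ≤ u m * u (m + 2) := by
  have hn0 : (0:ℝ) < n := by exact_mod_cast hn
  set h : ℝ := 1 / n with hh
  have hh0 : 0 < h := by positivity
  have hh1 : h ≤ 1 := by
    rw [hh, div_le_one hn0]; exact_mod_cast hn
  have hG'0 : ∀ x, a < x → 0 ≤ G' x :=
    fun x hx => monotone_hasDerivAt_nonneg hmono (hderiv x hx)
  -- log-convexity at step h (valid for h ∈ (0,1] by halving)
  have hlc' : ∀ x, a < x → (G' (x + h))^2 ≤ G' x * G' (x + 2*h) := by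
    intro x hx
    have hy : h/2 ∈ Ioo (0:ℝ) 1 := ⟨by positivity, by linarith⟩
    have A := hlc x hx (h/2) hy
    have B := hlc (x + h/2) (by linarith) (h/2) hy
    have C := hlc (x + h) (by linarith) (h/2) hy
    rw [show x + 2*(h/2) = x + h by ring] at A
    rw [show x + h/2 + h/2 = x + h by ring, show x + h/2 + 2*(h/2) = x + h/2 + h by ring] at B
    rw [show x + h + 2*(h/2) = x + 2*h by ring, show x + h + h/2 = x + h/2 + h by ring] at C
    set P := G' (x + h) with hP
    set q1 := G' (x + h/2) with hq1
    set q2 := G' (x + h/2 + h) with hq2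
    have hPn : 0 ≤ P := hG'0 _ (by linarith)
    have hq2n : 0 ≤ q2 := hG'0 _ (by linarith)
    have hxn : 0 ≤ G' x := hG'0 _ hx
    have hx2n : 0 ≤ G' (x + 2*h) := hG'0 _ (by linarith)
    rcases eq_or_lt_of_le hPn with hP0 | hPpos
    · rw [← hP0]
      simpa using mul_nonneg hxn hx2n
    · have h4 : P^2 * P^2 ≤ (G' x * G' (x + 2*h)) * P^2 := by
        calc P^2 * P^2 = (P^2)^2 := by ring
          _ ≤ (q1*q2)^2 := pow_le_pow_left₀ (sq_nonneg P) B 2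
          _ = q1^2 * q2^2 := by ring
          _ ≤ (G' x * P) * (P * G' (x + 2*h)) :=
              mul_le_mul A C (sq_nonneg q2) (mul_nonneg hxn hPn)
          _ = (G' x * G' (x + 2*h)) * P^2 := by ring
      exact le_of_mul_le_mul_right h4 (pow_pos hPpos 2)
  -- continuity of G on [s,t] for s ≥ a
  have hcontOn : ∀ s t : ℝ, a ≤ s → ContinuousOn G (Icc s t) := by
    intro s t hs x hx
    rcases eq_or_lt_of_le (hs.trans hx.1) with hxa | hxa
    · refine (hrc x).mono (fun y hy => ?_)
      exact le_trans (le_trans (hxa ▸ le_rfl) hs) hy.1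
    · exact ((hderiv x hxa).continuousAt).continuousWithinAt
  have hInt : ∀ s t : ℝ, a ≤ s → IntegrableOn G' (Ioc s t) := by
    intro s t hs
    rcases le_total s t with hst | hst
    · exact intervalIntegral.integrableOn_deriv_of_nonneg (hcontOn s t hs)
        (fun x hx => hderiv x (lt_of_le_of_lt hs hx.1))
        (fun x hx => hG'0 x (lt_of_le_of_lt hs hx.1))
    · rw [Ioc_eq_empty (not_lt.2 hst)]; exact integrableOn_empty
  have hFTC : ∀ s t : ℝ, a ≤ s → s ≤ t → ∫ x in Ioc s t, G' x = G t - G s := by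
    intro s t hs hst
    rw [← intervalIntegral.integral_of_le hst]
    refine intervalIntegral.integral_eq_sub_of_hasDerivAt_of_le hst (hcontOn s t hs)
      (fun x hx => hderiv x (lt_of_le_of_lt hs hx.1)) ?_
    exact (intervalIntegrable_iff_integrableOn_Ioc_of_le hst).2 (hInt s t hs)
  -- the sequence of integrals
  set J : ℕ → ℝ := fun m => ∫ x in Ioc (a + (m:ℝ)/n) (a + ((m:ℝ)+1)/n), G' x with hJdef
  have hsle : ∀ m : ℕ, a ≤ a + (m:ℝ)/n := fun m => le_add_of_nonneg_right (by positivity)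
  have hstep : ∀ m : ℕ, a + (m:ℝ)/n ≤ a + ((m:ℝ)+1)/n := by
    intro m
    have : (m:ℝ)/n ≤ ((m:ℝ)+1)/n := by
      rw [div_le_div_iff_of_pos_right hn0]; linarith
    linarith
  have hJnonneg : ∀ m, 0 ≤ J m := by
    intro m
    exact setIntegral_nonneg measurableSet_Ioc
      (fun x hx => hG'0 x (lt_of_le_of_lt (hsle m) hx.1))
  have hJeq : ∀ m : ℕ, 1 ≤ m → u m = J m := by
    intro m hm
    simp only [hJdef]
    rw [hum m hm, hFTC _ _ (hsle m) (hstep m)]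
  -- key Cauchy–Schwarz inequality for J
  have hkey : ∀ m : ℕ, J (m+1) ^ 2 ≤ J m * J (m+2) := by
    intro m
    set s := a + (m:ℝ)/n with hs_def
    have hs : a ≤ s := hsle m
    have hgt : ∀ x ∈ Ioc s (s+h), a < x := fun x hx => lt_of_le_of_lt hs hx.1
    have hmeasc : ∀ c : ℝ, 0 ≤ c →
        AEMeasurable (fun x => G' (x + c)) (volume.restrict (Ioc s (s+h))) := by
      intro c hc
      refine (((measurable_deriv G).comp (measurable_add_const c)).aemeasurable).congr ?_
      refine ae_restrict_of_forall_mem measurableSet_Ioc (fun x hx => ?_)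
      exact (hderiv (x+c) (by linarith [hgt x hx])).deriv
    -- shifted integrals
    have eshift : ∀ c : ℝ, (∫ x in Ioc s (s+h), G' (x + c)) = ∫ x in Ioc (s+c) (s+c+h), G' x := by
      intro c
      rw [← intervalIntegral.integral_of_le (show s ≤ s + h by linarith),
        ← intervalIntegral.integral_of_le (show s + c ≤ s + c + h by linarith),
        intervalIntegral.integral_comp_add_right, show s + h + c = s + c + h by ring]
    have hgic : ∀ c : ℝ, 0 ≤ c → IntegrableOn (fun x => G' (x + c)) (Ioc s (s+h)) := by
      intro c hc
      have h1 : IntervalIntegrable G' volume (s+c) (s+c+h) :=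
        (intervalIntegrable_iff_integrableOn_Ioc_of_le (by linarith)).2
          (hInt (s+c) (s+c+h) (by linarith))
      have h2 := h1.comp_add_right c
      rw [show s + c - c = s by ring, show s + c + h - c = s + h by ring] at h2
      exact (intervalIntegrable_iff_integrableOn_Ioc_of_le (by linarith)).1 h2
    have CS := integral_sq_le_cs (s := s) (t := s + h) G' (fun x => G' (x + 2*h))
      (fun x => G' (x + h))
      (hInt s (s+h) hs).aemeasurable
      (hmeasc (2*h) (by linarith))
      (fun x hx => hG'0 x (hgt x hx))
      (fun x hx => hG'0 _ (by linarith [hgt x hx]))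
      (fun x hx => hG'0 _ (by linarith [hgt x hx]))
      (hInt s (s+h) hs)
      (hgic (2*h) (by linarith))
      (fun x hx => hlc' x (hgt x hx))
    rw [eshift h, eshift (2*h)] at CS
    -- identify with J
    have c1 : a + ((m:ℝ)+1)/n = s + h := by rw [hs_def, hh]; push_cast; ring
    have c2 : a + ((m+1:ℕ):ℝ)/n = s + h := by rw [hs_def, hh]; push_cast; ring
    have c3 : a + (((m+1:ℕ):ℝ)+1)/n = s + h + h := by rw [hs_def, hh]; push_cast; ring
    have c4 : a + ((m+2:ℕ):ℝ)/n = s + 2*h := by rw [hs_def, hh]; push_cast; ring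
    have c5 : a + (((m+2:ℕ):ℝ)+1)/n = s + 2*h + h := by rw [hs_def, hh]; push_cast; ring
    have jm : J m = ∫ x in Ioc s (s+h), G' x := by
      simp only [hJdef]; rw [← hs_def, c1]
    have jm1 : J (m+1) = ∫ x in Ioc (s+h) (s+h+h), G' x := by
      simp only [hJdef]; rw [c2, c3]
    have jm2 : J (m+2) = ∫ x in Ioc (s+2*h) (s+2*h+h), G' x := by
      simp only [hJdef]; rw [c4, c5]
    rw [jm, jm1, jm2]
    convert CS using 2
  -- conclude
  intro m
  rcases m with _ | k
  · show u 1 ^ 2 ≤ u 0 * u 2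
    rw [hJeq 1 le_rfl, hJeq 2 (by omega)]
    have d0 : a + ((0:ℕ):ℝ)/n = a := by push_cast; ring
    have d1 : a + (((0:ℕ):ℝ)+1)/n = a + 1/n := by push_cast; ring
    have e0 : J 0 = G (a + 1/n) - G a := by
      simp only [hJdef]
      rw [d0, d1, hFTC a (a + 1/n) le_rfl (le_add_of_nonneg_right (by positivity))]
    have hGa : 0 ≤ G a := by
      have h1 := hG0 (a-1) (by linarith)
      have h2 := hmono (show a - 1 ≤ a by linarith)
      linarith
    have hJ0 : J 0 ≤ u 0 := by rw [e0, hu0]; linarith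
    calc J 1 ^ 2 ≤ J 0 * J 2 := hkey 0
      _ ≤ u 0 * J 2 := mul_le_mul_of_nonneg_right hJ0 (hJnonneg 2)
  · show u (k+1+1) ^ 2 ≤ u (k+1) * u (k+1+2)
    rw [hJeq (k+1+1) (by omega), hJeq (k+1) (by omega), hJeq (k+1+2) (by omega)]
    exact hkey (k+1)
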